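/- Fix real numbers 0 < t < 1 and q > 0, integers r ≥ 2 and n ≥ 1, a composition λ ∈ {0,…,r}ⁿ and a composition μ ∈ {0,…,r−1}ⁿ. Let λ* be defined by λ*_j = max(λ_j − 1, 0), and suppose μ is NOT a rearrangement of λ* (equivalently, m_{i−1}(μ) ≠ m_i(λ) for some 2 ≤ i ≤ r, where m_i(ν) = #{j : ν_j = i}). Then for all real x_1,…,x_n and every multi-index m ∈ ℕ^{r−1}, the coefficient of e_m in L̃_{λ_1,μ_1}(x_1)·L̃_{λ_2,μ_2}(x_2)···L̃_{λ_n,μ_n}(x_n)·s·(e_m) is zero; consequently the transition matrix element T_{λ,μ}(x_1,…,x_n) = Σ_{m∈ℕ^{r−1}} ⟨e_m, L̃_{λ_1,μ_1}(x_1)···L̃_{λ_n,μ_n}(x_n)·s·e_m⟩ equals 0. -/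

import Mathlib

/-!
STATEMENT 14 (Proposition 5.2): if the composition `μ` is not a rearrangement of `λ*`
(where `λ*_j = max(λ_j − 1, 0)`), then every diagonal matrix element of
`L̃_{λ_1,μ_1}(x_1)⋯L̃_{λ_n,μ_n}(x_n)·s` on the multi-family Fock space vanishes, and hence
the transition matrix element `T_{λ,μ}(x_1,…,x_n)` equals `0`.
-/

open scoped BigOperators

noncomputable section

/-- The multi-family Fock space: finitely supported functions on `ℕ^d`
(for families `2,…,r` one takes `d = r − 1`; family `p` corresponds to coordinate `p − 2`). -/
abbrev Fock (d : ℕ) : Type := (Fin d → ℕ) →₀ ℝ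

/-- The annihilation operator of family index `p`: `a_p·e_m = √(1−t^{m_p})·e_{m−δ_p}`
(automatically zero when `m_p = 0` since `√(1−t⁰) = 0`). -/
def aOp (t : ℝ) (d : ℕ) (p : Fin d) : Module.End ℝ (Fock d) :=
  Finsupp.lsum ℝ fun m =>
    Real.sqrt (1 - t ^ (m p)) • Finsupp.lsingle (Function.update m p (m p - 1))

/-- The creation operator of family index `p`: `a†_p·e_m = √(1−t^{m_p+1})·e_{m+δ_p}`. -/
def adOp (t : ℝ) (d : ℕ) (p : Fin d) : Module.End ℝ (Fock d) :=
  Finsupp.lsum ℝ fun m =>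
    Real.sqrt (1 - t ^ (m p + 1)) • Finsupp.lsingle (Function.update m p (m p + 1))

/-- The number operator of family index `p`: `k_p·e_m = t^{m_p}·e_m`. -/
def kOp (t : ℝ) (d : ℕ) (p : Fin d) : Module.End ℝ (Fock d) :=
  Finsupp.lsum ℝ fun m => (t ^ (m p) : ℝ) • Finsupp.lsingle m

/-- The twist operator: `s·e_m = (Π_{p=2}^{r} q^{(p−1)·m_p})·e_m`
(family `p` corresponds to coordinate `p − 2`, so the exponent is `(idx+1)·m_idx`). -/
def sOp (q : ℝ) (d : ℕ) : Module.End ℝ (Fock d) :=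
  Finsupp.lsum ℝ fun m =>
    (∏ p : Fin d, q ^ ((p.val + 1) * m p)) • Finsupp.lsingle m

/-- The oscillator `a_i` of family `i` (`2 ≤ i ≤ r`), acting on `Fock (r−1)`. -/
def aFam (t : ℝ) (r : ℕ) (i : ℕ) : Module.End ℝ (Fock (r - 1)) :=
  if h : 2 ≤ i ∧ i ≤ r then aOp t (r - 1) ⟨i - 2, by omega⟩ else 0

/-- The oscillator `a†_i` of family `i` (`2 ≤ i ≤ r`), acting on `Fock (r−1)`. -/
def adFam (t : ℝ) (r : ℕ) (i : ℕ) : Module.End ℝ (Fock (r - 1)) :=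
  if h : 2 ≤ i ∧ i ≤ r then adOp t (r - 1) ⟨i - 2, by omega⟩ else 0

/-- The oscillator `k_i` of family `i` (`2 ≤ i ≤ r`), acting on `Fock (r−1)`. -/
def kFam (t : ℝ) (r : ℕ) (i : ℕ) : Module.End ℝ (Fock (r - 1)) :=
  if h : 2 ≤ i ∧ i ≤ r then kOp t (r - 1) ⟨i - 2, by omega⟩ else 0

/-- The ordered product `k_{i+1}·k_{i+2}⋯k_r`. -/
def kprodFam (t : ℝ) (r : ℕ) (i : ℕ) : Module.End ℝ (Fock (r - 1)) :=
  ((List.range' (i + 1) (r - i)).map (kFam t r)).prod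

/-- The entry `L̃_{ij}(x)` of the reduced `(r+1) × r` matrix of Fock-space operators:
`L̃_{00} = 1`; `L̃_{0j} = a_{j+1}` (`1 ≤ j ≤ r−1`); `L̃_{10} = x·k_2⋯k_r`;
`L̃_{i0} = x·a†_i·k_{i+1}⋯k_r` (`2 ≤ i ≤ r`); `L̃_{i,i−1} = x·k_{i+1}⋯k_r` (`2 ≤ i ≤ r`);
`L̃_{ij} = x·a_{j+1}·a†_i·k_{i+1}⋯k_r` for `1 ≤ j+1 < i ≤ r`; `L̃_{ij} = 0` otherwise. -/
def LtilOp (t : ℝ) (r : ℕ) (x : ℝ) (i j : ℕ) : Module.End ℝ (Fock (r - 1)) :=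
  if i = 0 then (if j = 0 then 1 else aFam t r (j + 1))
  else if j = 0 then
    (if i = 1 then x • kprodFam t r 1 else x • (adFam t r i * kprodFam t r i))
  else if i = j + 1 then x • kprodFam t r i
  else if j + 1 < i then x • (aFam t r (j + 1) * adFam t r i * kprodFam t r i)
  else 0


def Shifts {d : ℕ} (c : Fin d) (deg : ℤ) (T : Module.End ℝ (Fock d)) : Prop :=
  ∀ m : Fin d → ℕ, ∃ (a : ℝ) (m' : Fin d → ℕ),
    T (Finsupp.single m 1) = a • Finsupp.single m' 1 ∧ (a = 0 ∨ (m' c : ℤ) = m c + deg)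

lemma shifts_congr {d : ℕ} {c : Fin d} {d1 d2 : ℤ} {T : Module.End ℝ (Fock d)}
    (h : Shifts c d1 T) (hd : d1 = d2) : Shifts c d2 T := hd ▸ h

lemma shifts_one {d : ℕ} (c : Fin d) : Shifts c 0 (1 : Module.End ℝ (Fock d)) := by
  intro m
  exact ⟨1, m, by simp, Or.inr (by simp)⟩

lemma shifts_zero {d : ℕ} (c : Fin d) (deg : ℤ) : Shifts c deg (0 : Module.End ℝ (Fock d)) := by
  intro m
  exact ⟨0, m, by simp, Or.inl rfl⟩

lemma shifts_smul {d : ℕ} {c : Fin d} {deg : ℤ} {T : Module.End ℝ (Fock d)} (x : ℝ)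
    (h : Shifts c deg T) : Shifts c deg (x • T) := by
  intro m
  obtain ⟨a, m', hT, hd⟩ := h m
  refine ⟨x * a, m', ?_, ?_⟩
  · simp [hT, mul_smul]
  · rcases hd with h0 | h1
    · exact Or.inl (by simp [h0])
    · exact Or.inr h1

lemma shifts_mul {d : ℕ} {c : Fin d} {d1 d2 : ℤ} {T U : Module.End ℝ (Fock d)}
    (hT : Shifts c d1 T) (hU : Shifts c d2 U) : Shifts c (d1 + d2) (T * U) := by
  intro m
  obtain ⟨a, m', hU1, hU2⟩ := hU m
  obtain ⟨b, m'', hT1, hT2⟩ := hT m'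
  refine ⟨a * b, m'', ?_, ?_⟩
  · rw [Module.End.mul_apply, hU1, map_smul, hT1, smul_smul, mul_comm]
  · rcases hU2 with h0 | h1
    · exact Or.inl (by simp [h0])
    · rcases hT2 with h0 | h2
      · exact Or.inl (by simp [h0])
      · exact Or.inr (by omega)

lemma shifts_aOp {d : ℕ} (t : ℝ) (c p : Fin d) :
    Shifts c (if p = c then -1 else 0) (aOp t d p) := by
  intro m
  refine ⟨Real.sqrt (1 - t ^ (m p)), Function.update m p (m p - 1), ?_, ?_⟩
  · simp [aOp, Finsupp.lsum_single, Finsupp.lsingle_apply]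
  · by_cases hp : p = c
    · subst hp
      by_cases h0 : m p = 0
      · exact Or.inl (by simp [h0])
      · exact Or.inr (by simp [Function.update_self]; omega)
    · exact Or.inr (by simp [Function.update_of_ne (Ne.symm hp), hp])

lemma shifts_adOp {d : ℕ} (t : ℝ) (c p : Fin d) :
    Shifts c (if p = c then 1 else 0) (adOp t d p) := by
  intro m
  refine ⟨Real.sqrt (1 - t ^ (m p + 1)), Function.update m p (m p + 1), ?_, ?_⟩
  · simp [adOp, Finsupp.lsum_single, Finsupp.lsingle_apply]
  · by_cases hp : p = c
    · subst hp
      exact Or.inr (by simp [Function.update_self])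
    · exact Or.inr (by simp [Function.update_of_ne (Ne.symm hp), hp])

lemma shifts_kOp {d : ℕ} (t : ℝ) (c p : Fin d) : Shifts c 0 (kOp t d p) := by
  intro m
  refine ⟨t ^ (m p), m, ?_, Or.inr (by simp)⟩
  simp [kOp, Finsupp.lsum_single, Finsupp.lsingle_apply]

lemma shifts_sOp {d : ℕ} (q : ℝ) (c : Fin d) : Shifts c 0 (sOp q d) := by
  intro m
  refine ⟨∏ p : Fin d, q ^ ((p.val + 1) * m p), m, ?_, Or.inr (by simp)⟩
  simp [sOp, Finsupp.lsum_single, Finsupp.lsingle_apply]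

lemma shifts_list_prod_zero {d : ℕ} {c : Fin d} :
    ∀ (l : List (Module.End ℝ (Fock d))), (∀ T ∈ l, Shifts c 0 T) → Shifts c 0 l.prod := by
  intro l
  induction l with
  | nil => intro _; simpa using shifts_one c
  | cons T l ih =>
    intro h
    have : (0 : ℤ) = 0 + 0 := by ring
    rw [List.prod_cons]
    exact shifts_congr
      (shifts_mul (h T (List.mem_cons_self)) (ih fun U hU => h U (List.mem_cons_of_mem T hU)))
      rfl

lemma shifts_kFam {r : ℕ} (t : ℝ) (c : Fin (r - 1)) (i : ℕ) : Shifts c 0 (kFam t r i) := by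
  unfold kFam
  split
  · exact shifts_kOp t c _
  · exact shifts_zero c 0

lemma shifts_kprodFam {r : ℕ} (t : ℝ) (c : Fin (r - 1)) (i : ℕ) :
    Shifts c 0 (kprodFam t r i) := by
  apply shifts_list_prod_zero
  intro T hT
  simp only [List.mem_map] at hT
  obtain ⟨j, _, rfl⟩ := hT
  exact shifts_kFam t c j

lemma shifts_aFam {r : ℕ} (t : ℝ) (c : Fin (r - 1)) (i : ℕ) :
    Shifts c (if i = c.val + 2 then -1 else 0) (aFam t r i) := by
  have hc : c.val < r - 1 := c.isLt
  unfold aFam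
  by_cases h : 2 ≤ i ∧ i ≤ r
  · rw [dif_pos h]
    refine shifts_congr (shifts_aOp t c ⟨i - 2, by omega⟩) ?_
    have heq : ((⟨i - 2, by omega⟩ : Fin (r-1)) = c) ↔ i = c.val + 2 := by
      rw [Fin.ext_iff]; simp; omega
    simp only [heq]
  · rw [dif_neg h]
    refine shifts_congr (shifts_zero c 0) ?_
    have : ¬ (i = c.val + 2) := by omega
    simp [this]

lemma shifts_adFam {r : ℕ} (t : ℝ) (c : Fin (r - 1)) (i : ℕ) :
    Shifts c (if i = c.val + 2 then 1 else 0) (adFam t r i) := by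
  have hc : c.val < r - 1 := c.isLt
  unfold adFam
  by_cases h : 2 ≤ i ∧ i ≤ r
  · rw [dif_pos h]
    refine shifts_congr (shifts_adOp t c ⟨i - 2, by omega⟩) ?_
    have heq : ((⟨i - 2, by omega⟩ : Fin (r-1)) = c) ↔ i = c.val + 2 := by
      rw [Fin.ext_iff]; simp; omega
    simp only [heq]
  · rw [dif_neg h]
    refine shifts_congr (shifts_zero c 0) ?_
    have : ¬ (i = c.val + 2) := by omega
    simp [this]

lemma shifts_LtilOp {r : ℕ} (t x : ℝ) (c : Fin (r - 1)) (i j : ℕ) :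
    Shifts c ((if i = c.val + 2 then 1 else 0) - (if j = c.val + 1 then 1 else 0))
      (LtilOp t r x i j) := by
  have hc : c.val < r - 1 := c.isLt
  unfold LtilOp
  by_cases hi0 : i = 0
  · subst hi0
    by_cases hj0 : j = 0
    · subst hj0
      simpa using shifts_one c
    · simp only [if_pos rfl, if_neg hj0]
      refine shifts_congr (shifts_aFam t c (j + 1)) ?_
      split_ifs <;> (try exact (‹False›).elim) <;> omega
  · by_cases hj0 : j = 0
    · subst hj0
      by_cases hi1 : i = 1
      · subst hi1
        simp only [if_neg hi0, if_pos rfl]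
        refine shifts_congr (shifts_smul x (shifts_kprodFam t c 1)) ?_
        split_ifs <;> (try exact (‹False›).elim) <;> omega
      · simp only [if_neg hi0, if_pos rfl, if_neg hi1]
        refine shifts_congr (shifts_smul x
          (shifts_mul (shifts_adFam t c i) (shifts_kprodFam t c i))) ?_
        split_ifs <;> (try exact (‹False›).elim) <;> omega
    · by_cases hij : i = j + 1
      · subst hij
        simp only [if_neg (by omega : ¬ j + 1 = 0), if_neg hj0, if_pos rfl]
        refine shifts_congr (shifts_smul x (shifts_kprodFam t c (j + 1))) ?_
        split_ifs <;> (try exact (‹False›).elim) <;> omega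
      · by_cases hlt : j + 1 < i
        · simp only [if_neg hi0, if_neg hj0, if_neg hij, if_pos hlt]
          refine shifts_congr (shifts_smul x
            (shifts_mul (shifts_mul (shifts_aFam t c (j + 1)) (shifts_adFam t c i))
              (shifts_kprodFam t c i))) ?_
          split_ifs <;> (try exact (‹False›).elim) <;> omega
        · simp only [if_neg hi0, if_neg hj0, if_neg hij, if_neg hlt]
          exact shifts_zero c _


lemma shifts_prod_ofFn {d : ℕ} {c : Fin d} :
    ∀ {n : ℕ} (F : Fin n → Module.End ℝ (Fock d)) (D : Fin n → ℤ),
      (∀ p, Shifts c (D p) (F p)) → Shifts c (∑ p, D p) (List.ofFn F).prod := by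
  intro n
  induction n with
  | zero => intro F D h; simpa using shifts_one c
  | succ n ih =>
    intro F D h
    rw [List.ofFn_succ, List.prod_cons, Fin.sum_univ_succ]
    exact shifts_mul (h 0) (ih _ _ fun p => h p.succ)

lemma shifts_diag_zero {d : ℕ} {c : Fin d} {D : ℤ} {T : Module.End ℝ (Fock d)}
    (h : Shifts c D T) (hD : D ≠ 0) (m : Fin d → ℕ) :
    (T (Finsupp.single m 1)) m = 0 := by
  obtain ⟨a, m', h1, h2⟩ := h m
  rcases h2 with h0 | hdeg
  · simp [h1, h0]
  · have hne : m' ≠ m := by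
      intro he; rw [he] at hdeg; omega
    rw [h1, Finsupp.smul_apply, Finsupp.single_eq_of_ne' hne, smul_zero]

lemma count_ofFn : ∀ {n : ℕ} (f : Fin n → ℕ) (v : ℕ),
    (List.ofFn f).count v = ∑ j, (if f j = v then 1 else 0) := by
  intro n
  induction n with
  | zero => intro f v; simp
  | succ n ih =>
    intro f v
    rw [List.ofFn_succ, List.count_cons, Fin.sum_univ_succ, ih]
    by_cases h : f 0 = v
    · simp [h]
      omega
    · simp [h, Ne.symm h]

lemma exists_perm_of_counts (n r : ℕ) (hr : 2 ≤ r)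
    (lam : Fin n → Fin (r + 1)) (mu : Fin n → Fin r)
    (hcount : ∀ c : Fin (r - 1),
      (∑ j, if (mu j).val = c.val + 1 then 1 else 0) =
      (∑ j, if (lam j).val = c.val + 2 then 1 else 0)) :
    ∃ σ : Equiv.Perm (Fin n), ∀ j, (mu j).val = (lam (σ j)).val - 1 := by
  set g : Fin n → ℕ := fun j => (mu j).val with hgdef
  set f : Fin n → ℕ := fun j => (lam j).val - 1 with hfdef
  have hg : ∀ j, g j < r := fun j => (mu j).isLt
  have hf : ∀ j, f j < r := fun j => by
    have := (lam j).isLt; simp only [hfdef]; omega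
  -- counts agree at every positive value
  have keypos : ∀ w : ℕ, (∑ j, if g j = w + 1 then 1 else 0) =
      (∑ j, if f j = w + 1 then 1 else 0) := by
    intro w
    by_cases hw : w < r - 1
    · have h1 := hcount ⟨w, hw⟩
      simp only at h1
      rw [h1]
      apply Finset.sum_congr rfl
      intro j _
      have := (lam j).isLt
      have : ((lam j).val = w + 2) ↔ (f j = w + 1) := by
        simp only [hfdef]; omega
      simp only [this]
    · rw [Finset.sum_eq_zero, Finset.sum_eq_zero] <;> intro j _
      · have := hf j; have : ¬ (f j = w + 1) := by omega
        simp [this]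
      · have := hg j; have : ¬ (g j = w + 1) := by omega
        simp [this]
  -- totals agree, hence counts agree at 0
  have total : ∀ (h : Fin n → ℕ), (∀ j, h j < r) →
      (∑ v ∈ Finset.range r, ∑ j, if h j = v then 1 else 0) = n := by
    intro h hh
    rw [Finset.sum_comm]
    have : ∀ j : Fin n, (∑ v ∈ Finset.range r, if h j = v then (1:ℕ) else 0) = 1 := by
      intro j
      rw [Finset.sum_ite_eq]
      simp [hh j]
    rw [Finset.sum_congr rfl fun j _ => this j]
    simp
  have key0 : (∑ j, if g j = 0 then 1 else 0) = (∑ j, if f j = 0 then 1 else 0) := by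
    have tg := total g hg
    have tf := total f hf
    obtain ⟨r', rfl⟩ : ∃ r', r = r' + 1 := ⟨r - 1, by omega⟩
    rw [Finset.sum_range_succ'] at tg tf
    have hs : (∑ v ∈ Finset.range r', ∑ j, if g j = v + 1 then 1 else 0) =
        (∑ v ∈ Finset.range r', ∑ j, if f j = v + 1 then 1 else 0) :=
      Finset.sum_congr rfl fun v _ => keypos v
    omega
  have key : ∀ v, (List.ofFn g).count v = (List.ofFn f).count v := by
    intro v
    rw [count_ofFn, count_ofFn]
    cases v with
    | zero => exact key0
    | succ w => exact keypos w
  have hperm : (List.ofFn g).Perm (List.ofFn f) := List.perm_iff_count.mpr fun v => key v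
  have hperm2 : (List.ofFn (g ∘ Tuple.sort g)).Perm (List.ofFn (f ∘ Tuple.sort f)) :=
    ((Tuple.sort g).ofFn_comp_perm g).trans (hperm.trans ((Tuple.sort f).ofFn_comp_perm f).symm)
  have heq : g ∘ Tuple.sort g = f ∘ Tuple.sort f :=
    List.ofFn_injective (List.Perm.eq_of_sortedLE
      (Tuple.monotone_sort g).sortedLE_ofFn (Tuple.monotone_sort f).sortedLE_ofFn hperm2)
  refine ⟨(Tuple.sort g).symm.trans (Tuple.sort f), fun j => ?_⟩
  have h := congrFun heq ((Tuple.sort g).symm j)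
  simp only [Function.comp_apply, Equiv.apply_symm_apply] at h
  simpa [Equiv.trans_apply] using h

theorem transition_matrix_element_vanishes
    (t q : ℝ) (ht0 : 0 < t) (ht1 : t < 1) (hq : 0 < q)
    (r n : ℕ) (hr : 2 ≤ r) (hn : 1 ≤ n)
    (lam : Fin n → Fin (r + 1)) (mu : Fin n → Fin r)
    (hmu : ¬ ∃ σ : Equiv.Perm (Fin n), ∀ j : Fin n, (mu j).val = (lam (σ j)).val - 1)
    (xs : Fin n → ℝ) :
    (∀ m : Fin (r - 1) → ℕ,
        (((List.ofFn fun p : Fin n => LtilOp t r (xs p) (lam p).val (mu p).val).prod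
            * sOp q (r - 1)) (Finsupp.single m 1)) m = 0)
    ∧ (∑' m : Fin (r - 1) → ℕ,
        (((List.ofFn fun p : Fin n => LtilOp t r (xs p) (lam p).val (mu p).val).prod
            * sOp q (r - 1)) (Finsupp.single m 1)) m) = 0 := by
  -- find a family coordinate where the counts disagree
  have hex : ∃ c : Fin (r - 1),
      (∑ j, if (mu j).val = c.val + 1 then 1 else 0) ≠
      (∑ j, if (lam j).val = c.val + 2 then 1 else 0) := by
    by_contra hall
    push_neg at hall
    exact hmu (exists_perm_of_counts n r hr lam mu hall)
  obtain ⟨c, hc⟩ := hex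
  set P : Module.End ℝ (Fock (r - 1)) :=
    (List.ofFn fun p : Fin n => LtilOp t r (xs p) (lam p).val (mu p).val).prod with hP
  set D : ℤ := ∑ p : Fin n,
    ((if (lam p).val = c.val + 2 then 1 else 0) - (if (mu p).val = c.val + 1 then 1 else 0))
    with hDdef
  have hD : D ≠ 0 := by
    rw [hDdef, Finset.sum_sub_distrib]
    have hcast : ∀ (h : Fin n → ℕ) (w : ℕ),
        (∑ j, if h j = w then (1:ℤ) else 0) = ((∑ j, if h j = w then 1 else 0 : ℕ) : ℤ) := by
      intro h w
      push_cast
      rfl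
    rw [hcast (fun j => (lam j).val) (c.val + 2), hcast (fun j => (mu j).val) (c.val + 1)]
    intro hcontra
    apply hc
    omega
  have hshift : Shifts c D P :=
    shifts_prod_ofFn _ _ fun p => shifts_LtilOp t (xs p) c (lam p).val (mu p).val
  have hTot : Shifts c D (P * sOp q (r - 1)) :=
    shifts_congr (shifts_mul hshift (shifts_sOp q c)) (by ring)
  have hzero : ∀ m : Fin (r - 1) → ℕ,
      ((P * sOp q (r - 1)) (Finsupp.single m 1)) m = 0 :=
    fun m => shifts_diag_zero hTot hD m
  refine ⟨hzero, ?_⟩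
  rw [tsum_congr hzero]
  exact tsum_zero

end
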